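/- For any n ≥ 2, there is no equiangular tight frame of n+2 vectors for R^n. Equivalently, (2/n)·cos(π/(n+2)) > √(2/(n(n+1))). -/
import Mathlib

open scoped RealInnerProductSpace
abbrev E (n : ℕ) := EuclideanSpace ℝ (Fin n)
noncomputable def cohF {n m : ℕ} (x : Fin m → E n) : ℝ :=
  sSup {r : ℝ | ∃ i j : Fin m, i ≠ j ∧ r = |⟪x i, x j⟫|}

open Finset in
lemma gram_contra (n : ℕ) (hn : 2 ≤ n) (g : Fin (n+2) → Fin (n+2) → ℝ)
    (hsym : ∀ i j, g i j = g j i) (hdiag : ∀ i, g i i = 1)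
    (hG : ∀ k l, ∑ i, g i k * g i l = (((n:ℝ)+2)/n) * g k l)
    (c : ℝ) (hc : ∀ i j, i ≠ j → |g i j| = c) : False := by
  have hn0 : (0:ℝ) < n := by exact_mod_cast (by omega : 0 < n)
  have hne01 : (0 : Fin (n+2)) ≠ 1 := by
    simp [Fin.ext_iff]
  have hc0 : 0 ≤ c := by rw [← hc 0 1 hne01]; exact abs_nonneg _
  -- value of c^2
  have hsq : ∀ i j, i ≠ j → g i j ^ 2 = c ^ 2 := by
    intro i j h; rw [← sq_abs, hc i j h]
  have key0 := hG 0 0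
  have hsplit : ∑ i, g i 0 * g i 0
      = g 0 0 * g 0 0 + ∑ i ∈ univ.erase 0, g i 0 * g i 0 :=
    (Finset.add_sum_erase _ _ (mem_univ 0)).symm
  have herase : ∑ i ∈ univ.erase 0, g i 0 * g i 0 = ((n:ℝ)+1) * c^2 := by
    have h1 : ∀ i ∈ univ.erase (0 : Fin (n+2)), g i 0 * g i 0 = c^2 := by
      intro i hi
      have hi0 : i ≠ 0 := (Finset.mem_erase.mp hi).1
      nlinarith [hsq i 0 hi0]
    rw [Finset.sum_congr rfl h1, Finset.sum_const, Finset.card_erase_of_mem (mem_univ 0), Finset.card_univ]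
    simp
  have hcsq : c ^ 2 = 2 / ((n:ℝ) * (n+1)) := by
    rw [hsplit, herase, hdiag] at key0
    field_simp at key0 ⊢
    nlinarith [key0]
  have hcpos : 0 < c := by
    rcases hc0.lt_or_eq with h | h
    · exact h
    · exfalso
      rw [← h] at hcsq
      have : (0:ℝ) < 2 / ((n:ℝ) * (n+1)) := by positivity
      simp at hcsq; nlinarith
  -- the rest-sum identity
  have hrest : ∀ k l : Fin (n+2), k ≠ l →
      ∑ i ∈ (univ.erase k).erase l, g i k * g i l = ((2-(n:ℝ))/n) * g k l := by
    intro k l hkl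
    have h1 : ∑ i, g i k * g i l
        = g k k * g k l + ∑ i ∈ univ.erase k, g i k * g i l :=
      (Finset.add_sum_erase _ _ (mem_univ k)).symm
    have h2 : ∑ i ∈ univ.erase k, g i k * g i l
        = g l k * g l l + ∑ i ∈ (univ.erase k).erase l, g i k * g i l :=
      (Finset.add_sum_erase _ _ (Finset.mem_erase.mpr ⟨hkl.symm, mem_univ l⟩)).symm
    have := hG k l
    rw [h1, h2, hdiag, hdiag, hsym l k] at this
    have hexp : (((n:ℝ)+2)/n) * g k l - 2 * g k l = ((2-(n:ℝ))/n) * g k l := by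
      field_simp; ring
    linarith
  rcases eq_or_lt_of_le hn with h2 | h3
  · -- n = 2 case
    subst h2
    have hset1 : ((univ.erase (0 : Fin (2+2))).erase 1) = {2, 3} := by decide
    have hset2 : ((univ.erase (0 : Fin (2+2))).erase 2) = {1, 3} := by decide
    have hset3 : ((univ.erase (0 : Fin (2+2))).erase 3) = {1, 2} := by decide
    have E1 : g 0 2 * g 1 2 + g 0 3 * g 1 3 = 0 := by
      have h := hrest 0 1 (by decide)
      rw [hset1, Finset.sum_pair (by decide : (2 : Fin (2+2)) ≠ 3)] at h
      rw [hsym 2 0, hsym 2 1, hsym 3 0, hsym 3 1] at h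
      norm_num at h
      linarith [h]
    have E2 : g 0 1 * g 1 2 + g 0 3 * g 2 3 = 0 := by
      have h := hrest 0 2 (by decide)
      rw [hset2, Finset.sum_pair (by decide : (1 : Fin (2+2)) ≠ 3)] at h
      rw [hsym 1 0, hsym 3 0, hsym 3 2] at h
      norm_num at h
      linarith [h]
    have E3 : g 0 1 * g 1 3 + g 0 2 * g 2 3 = 0 := by
      have h := hrest 0 3 (by decide)
      rw [hset3, Finset.sum_pair (by decide : (1 : Fin (2+2)) ≠ 2)] at h
      rw [hsym 1 0, hsym 2 0] at h
      norm_num at h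
      linarith [h]
    have s01 := hsq 0 1 (by decide)
    have s02 := hsq 0 2 (by decide)
    have s03 := hsq 0 3 (by decide)
    have s12 := hsq 1 2 (by decide)
    have s13 := hsq 1 3 (by decide)
    have s23 := hsq 2 3 (by decide)
    have hc2 : (0:ℝ) < c^2 := by positivity
    have hef : g 1 2 * g 1 3 = g 0 2 * g 0 3 := by
      have h1 : (g 0 1 * g 1 2) * (g 0 1 * g 1 3) = (g 0 3 * g 2 3) * (g 0 2 * g 2 3) := by
        rw [show g 0 1 * g 1 2 = -(g 0 3 * g 2 3) by linarith,
            show g 0 1 * g 1 3 = -(g 0 2 * g 2 3) by linarith]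
        ring
      have h2 : c^2 * (g 1 2 * g 1 3) = c^2 * (g 0 2 * g 0 3) := by
        calc c^2 * (g 1 2 * g 1 3) = (g 0 1 * g 1 2) * (g 0 1 * g 1 3) := by
              rw [← s01]; ring
          _ = (g 0 3 * g 2 3) * (g 0 2 * g 2 3) := h1
          _ = c^2 * (g 0 2 * g 0 3) := by rw [← s23]; ring
      exact mul_left_cancel₀ (ne_of_gt hc2) h2
    have hb : g 0 2 * c^2 = -(g 0 2 * c^2) := by
      calc g 0 2 * c^2 = (g 0 2 * g 1 2) * g 1 2 := by rw [← s12]; ring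
        _ = (-(g 0 3 * g 1 3)) * g 1 2 := by
              rw [show g 0 2 * g 1 2 = -(g 0 3 * g 1 3) by linarith]
        _ = -(g 0 3 * (g 1 2 * g 1 3)) := by ring
        _ = -(g 0 3 * (g 0 2 * g 0 3)) := by rw [hef]
        _ = -(g 0 2 * c^2) := by rw [← s03]; ring
    have h0 : g 0 2 * c^2 = 0 := by linarith
    rcases mul_eq_zero.mp h0 with h | h
    · rw [h] at s02; norm_num at s02; nlinarith
    · exact absurd h (ne_of_gt hc2)
  · -- 2 < n case
    set ε : Fin (n+2) → Fin (n+2) → ℤ := fun i j => if 0 ≤ g i j then 1 else -1 with hε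
    have hgc : ∀ i j, i ≠ j → g i j = ((ε i j : ℤ) : ℝ) * c := by
      intro i j hij
      rw [hε]
      rcases (abs_eq hc0).mp (hc i j hij) with h | h
      · simp only []
        rw [if_pos (by rw [h]; exact hc0), h]
        norm_num
      · simp only []
        rw [if_neg (by rw [h]; exact not_le.mpr (by linarith)), h]
        push_cast; ring
    have he2 : ∀ i j, ((ε i j : ℤ) : ℝ)^2 = 1 := by
      intro i j
      rw [hε]
      simp only []
      split_ifs <;> norm_num
    set t := (univ.erase (0 : Fin (n+2))).erase 1 with ht
    set S : ℤ := ∑ i ∈ t, ε i 0 * ε i 1 with hSdef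
    have hsum : ∑ i ∈ t, g i 0 * g i 1 = (S:ℝ) * c^2 := by
      have hterm : ∀ i ∈ t, g i 0 * g i 1 = ((ε i 0 * ε i 1 : ℤ) : ℝ) * c^2 := by
        intro i hi
        have hi1 : i ≠ 1 := (Finset.mem_erase.mp hi).1
        have hi0 : i ≠ 0 := (Finset.mem_erase.mp (Finset.mem_erase.mp hi).2).1
        rw [hgc i 0 hi0, hgc i 1 hi1]
        push_cast
        ring
      rw [Finset.sum_congr rfl hterm, ← Finset.sum_mul, hSdef]
      push_cast
      ring
    have heq : (S:ℝ) * c^2 = ((2-(n:ℝ))/n) * ((ε 0 1 : ℤ) : ℝ) * c := by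
      rw [← hsum, hrest 0 1 hne01, hgc 0 1 hne01]
      ring
    have hc2 : (c:ℝ)^2 ≠ 0 := by positivity
    have heq3 : (S:ℝ)^2 * c^2 = ((2-(n:ℝ))/n)^2 := by
      apply mul_right_cancel₀ hc2
      calc (S:ℝ)^2 * c^2 * c^2 = ((S:ℝ) * c^2)^2 := by ring
        _ = (((2-(n:ℝ))/n) * ((ε 0 1 : ℤ) : ℝ) * c)^2 := by rw [heq]
        _ = ((2-(n:ℝ))/n)^2 * (((ε 0 1 : ℤ) : ℝ)^2) * c^2 := by ring
        _ = ((2-(n:ℝ))/n)^2 * c^2 := by rw [he2]; ring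
    clear_value S
    clear hSdef hsum heq
    have hreal : 2*(n:ℝ)*(S:ℝ)^2 = ((n:ℝ)+1)*((n:ℝ)-2)^2 := by
      rw [hcsq] at heq3
      have hn1 : (0:ℝ) < (n:ℝ)+1 := by positivity
      field_simp at heq3
      nlinarith [heq3]
    have hint : 2*(n:ℤ)*S^2 = ((n:ℤ)+1)*((n:ℤ)-2)^2 := by exact_mod_cast hreal
    have hdvd : (n:ℤ) ∣ 4 := ⟨2*S^2 - (n:ℤ)^2 + 3*(n:ℤ), by linear_combination (-1 : ℤ) * hint⟩
    have hdvdn : n ∣ 4 := by exact_mod_cast hdvd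
    have hle : n ≤ 4 := Nat.le_of_dvd (by norm_num) hdvdn
    interval_cases n
    · exact absurd hdvdn (by norm_num)
    · have h5 : 2*S^2 = 5 := by push_cast at hint; linarith
      exact absurd ⟨S^2, h5.symm⟩ (by norm_num : ¬ (2:ℤ) ∣ 5)

theorem no_etf_n_add_two (n : ℕ) (hn : 2 ≤ n) :
    (¬ ∃ x : Fin (n + 2) → E n, (∀ i, ‖x i‖ = 1) ∧
      (∀ v : E n, ∑ i, ⟪x i, v⟫ • x i = (((n : ℝ) + 2) / n) • v) ∧
      ∃ c : ℝ, ∀ i j : Fin (n + 2), i ≠ j → |⟪x i, x j⟫| = c) ∧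
    (2 / (n : ℝ)) * Real.cos (Real.pi / (n + 2)) > Real.sqrt (2 / ((n : ℝ) * (n + 1))) := by
  constructor
  · rintro ⟨x, hnorm, hframe, c, hc⟩
    refine gram_contra n hn (fun i j => ⟪x i, x j⟫) (fun i j => real_inner_comm _ _)
      (fun i => ?_) (fun k l => ?_) c hc
    · show (⟪x i, x i⟫ : ℝ) = 1
      rw [real_inner_self_eq_norm_sq, hnorm i]; norm_num
    · have h := congrArg (fun v => ⟪v, x l⟫) (hframe (x k))
      simp only [sum_inner, real_inner_smul_left] at h
      exact h
  · have hnR : (2:ℝ) ≤ (n:ℝ) := by exact_mod_cast hn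
    have hn0 : (0:ℝ) < (n:ℝ) := by linarith
    have hcos : Real.sqrt 2 / 2 ≤ Real.cos (Real.pi / ((n:ℝ)+2)) := by
      rw [← Real.cos_pi_div_four]
      apply Real.cos_le_cos_of_nonneg_of_le_pi
      · positivity
      · exact div_le_self Real.pi_pos.le (by norm_num)
      · apply div_le_div_of_nonneg_left Real.pi_pos.le (by norm_num)
        linarith
    have hlhs : Real.sqrt 2 / (n:ℝ) ≤ 2/(n:ℝ) * Real.cos (Real.pi / ((n:ℝ)+2)) := by
      have h := mul_le_mul_of_nonneg_left hcos (by positivity : (0:ℝ) ≤ 2/(n:ℝ))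
      calc Real.sqrt 2 / (n:ℝ) = 2/(n:ℝ) * (Real.sqrt 2 / 2) := by ring
        _ ≤ _ := h
    have hrhs : Real.sqrt (2 / ((n:ℝ) * (n+1))) < Real.sqrt 2 / (n:ℝ) := by
      have h1 : Real.sqrt (2/((n:ℝ)*(n+1))) < Real.sqrt (2/((n:ℝ)*n)) := by
        apply Real.sqrt_lt_sqrt (by positivity)
        apply div_lt_div_of_pos_left (by norm_num) (by positivity)
        nlinarith
      have h2 : Real.sqrt (2/((n:ℝ)*n)) = Real.sqrt 2 / (n:ℝ) := by
        have e : (Real.sqrt 2/(n:ℝ))^2 = 2/((n:ℝ)*(n:ℝ)) := by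
          rw [div_pow, Real.sq_sqrt (by norm_num : (0:ℝ) ≤ 2)]; ring
        rw [← e, Real.sqrt_sq (by positivity)]
      rw [h2] at h1; exact h1
    linarith
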